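/- Let U be an n × r real matrix and for T ⊆ {1,...,n} let U(T) be the submatrix of rows indexed by T. Then the function φ(T) = log det(U(T) U(T)ᵀ) is submodular on subsets T for which U(T)U(T)ᵀ is positive definite: for A ⊆ B and i ∉ B with all relevant Gram matrices positive definite, φ(A ∪ {i}) − φ(A) ≥ φ(B ∪ {i}) − φ(B). -/

import Mathlib

open Matrix Finset

variable {n : ℕ}

/-- Principal submatrix of `S` with rows/columns in `T`. -/
private def msub (S : Matrix (Fin n) (Fin n) ℝ) (T : Finset (Fin n)) :
    Matrix T T ℝ :=
  S.submatrix (fun j : T => (j : Fin n)) (fun j : T => (j : Fin n))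

/-- Schur complement of `T` in `insert i T`. -/
private noncomputable def schur (S : Matrix (Fin n) (Fin n) ℝ) (T : Finset (Fin n)) (i : Fin n) : ℝ :=
  S i i - dotProduct (fun j : T => S i (j : Fin n))
    ((msub S T)⁻¹.mulVec (fun j : T => S (j : Fin n) i))

private def insEquiv (i : Fin n) (T : Finset (Fin n)) (hi : i ∉ T) :
    ({x // x ∈ T} ⊕ Unit) ≃ {x // x ∈ insert i T} where
  toFun := Sum.elim (fun j => ⟨j.1, Finset.mem_insert_of_mem j.2⟩)
    (fun _ => ⟨i, Finset.mem_insert_self i T⟩)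
  invFun x := if h : x.1 ∈ T then Sum.inl ⟨x.1, h⟩ else Sum.inr ()
  left_inv := by
    rintro (⟨j, hj⟩ | ⟨⟩)
    · simp [hj]
    · simp [hi]
  right_inv := by
    rintro ⟨x, hx⟩
    by_cases h : x ∈ T
    · simp [h]
    · have hxi : x = i := by
        rcases Finset.mem_insert.mp hx with h' | h'
        · exact h'
        · exact absurd h' h
      subst hxi
      simp [h]

private lemma det_insert (S : Matrix (Fin n) (Fin n) ℝ) (T : Finset (Fin n)) (i : Fin n)
    (hi : i ∉ T) (hT : (msub S T).PosDef) :
    (msub S (insert i T)).det = (msub S T).det * schur S T i := by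
  haveI : Invertible (msub S T) :=
    Matrix.invertibleOfIsUnitDet _ (isUnit_iff_ne_zero.mpr hT.det_pos.ne')
  have e := insEquiv i T hi
  rw [← Matrix.det_submatrix_equiv_self (insEquiv i T hi) (msub S (insert i T))]
  have hblock : (msub S (insert i T)).submatrix (insEquiv i T hi) (insEquiv i T hi) =
      Matrix.fromBlocks (msub S T) (Matrix.of fun (j : T) (_ : Unit) => S (j : Fin n) i)
        (Matrix.of fun (_ : Unit) (j : T) => S i (j : Fin n))
        (Matrix.of fun (_ : Unit) (_ : Unit) => S i i) := by
    ext a b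
    cases a <;> cases b <;> rfl
  rw [hblock, Matrix.det_fromBlocks₁₁, Matrix.invOf_eq_nonsing_inv]
  congr 1
  rw [Matrix.det_unique]
  show S i i - _ = schur S T i
  unfold schur
  congr 1
  simp only [Matrix.mul_apply, Matrix.of_apply, dotProduct, Matrix.mulVec,
    Finset.sum_mul, Finset.mul_sum]
  rw [Finset.sum_comm]
  exact Finset.sum_congr rfl fun x _ => Finset.sum_congr rfl fun y _ => by ring

/-- Lower bound on quadratic: `2⟨c,x⟩ - ⟨x,Mx⟩ ≤ ⟨c, M⁻¹c⟩` for symmetric posdef `M`. -/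
private lemma quad_le {m : Type*} [Fintype m] [DecidableEq m] (M : Matrix m m ℝ)
    (hM : M.PosDef) (hsym : M.IsSymm) (c x : m → ℝ) :
    2 * dotProduct c x - dotProduct x (M.mulVec x)
      ≤ dotProduct c (M⁻¹.mulVec c) := by
  set z := M⁻¹.mulVec c with hz
  have hMz : M.mulVec z = c := by
    rw [hz, Matrix.mulVec_mulVec, Matrix.mul_nonsing_inv _ (isUnit_iff_ne_zero.mpr hM.det_pos.ne'),
      Matrix.one_mulVec]
  have hpos : 0 ≤ dotProduct (x - z) (M.mulVec (x - z)) := by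
    have := hM.posSemidef.dotProduct_mulVec_nonneg (x - z)
    simpa using this
  have hzm : ∀ w : m → ℝ, dotProduct z (M.mulVec w) = dotProduct c w := by
    intro w
    rw [dotProduct_mulVec]
    congr 1
    rw [← Matrix.mulVec_transpose, hsym.eq, hMz]
  have hxz : dotProduct x (M.mulVec z) = dotProduct c x := by
    rw [hMz, dotProduct_comm]
  have expand : dotProduct (x - z) (M.mulVec (x - z)) =
      dotProduct x (M.mulVec x) - 2 * dotProduct c x
        + dotProduct c z := by
    rw [Matrix.mulVec_sub, dotProduct_sub, sub_dotProduct,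
      sub_dotProduct, hxz, hzm x, hzm z]
    ring
  have : dotProduct c z = dotProduct c (M⁻¹.mulVec c) := rfl
  linarith [hpos, expand]

private lemma schur_pos (S : Matrix (Fin n) (Fin n) ℝ) (T : Finset (Fin n)) (i : Fin n)
    (hi : i ∉ T) (hT : (msub S T).PosDef) (hT' : (msub S (insert i T)).PosDef) :
    0 < schur S T i := by
  have h := det_insert S T i hi hT
  have h1 := hT.det_pos
  have h2 := hT'.det_pos
  nlinarith

/-- Monotonicity of the Schur complement. -/
private lemma schur_mono (S : Matrix (Fin n) (Fin n) ℝ) (hS : S.IsSymm)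
    (A B : Finset (Fin n)) (i : Fin n) (hAB : A ⊆ B)
    (hA : (msub S A).PosDef) (hB : (msub S B).PosDef) :
    schur S B i ≤ schur S A i := by
  classical
  set cA : A → ℝ := fun j => S (j : Fin n) i with hcA
  set xA : A → ℝ := (msub S A)⁻¹.mulVec cA with hxA
  -- extension of xA by zero, as a total function
  set y : Fin n → ℝ := fun j => if h : j ∈ A then xA ⟨j, h⟩ else 0 with hy
  have hsymA : (msub S A).IsSymm := by
    unfold msub Matrix.IsSymm
    ext a b
    simp [Matrix.transpose_apply, hS.apply]
  -- the candidate vector on B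
  set yB : B → ℝ := fun j => y (j : Fin n) with hyB
  -- quad_le on B with the extension
  have key := quad_le (msub S B) hB (by
    unfold msub Matrix.IsSymm
    ext a b
    simp [Matrix.transpose_apply, hS.apply]) (fun j : B => S i (j : Fin n)) yB
  -- compute the linear term
  have hMAxA : (msub S A).mulVec xA = cA := by
    rw [hxA, Matrix.mulVec_mulVec,
      Matrix.mul_nonsing_inv _ (isUnit_iff_ne_zero.mpr hA.det_pos.ne'), Matrix.one_mulVec]
  have hlin : dotProduct (fun j : B => S i (j : Fin n)) yB
      = dotProduct (fun j : A => S i (j : Fin n)) xA := by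
    unfold dotProduct
    rw [Finset.sum_coe_sort B (fun j => S i j * y j)]
    rw [← Finset.sum_subset hAB (fun x _ hx => by simp [hy, hx])]
    rw [← Finset.sum_coe_sort A (fun j => S i j * y j)]
    refine Finset.sum_congr rfl fun j _ => ?_
    simp [hy, j.2]
  -- compute the quadratic term
  have hquadT : ∀ (T : Finset (Fin n)),
      dotProduct (fun j : T => y (j : Fin n)) ((msub S T).mulVec (fun j : T => y (j : Fin n)))
        = ∑ j ∈ T, ∑ k ∈ T, y j * (S j k * y k) := by
    intro T
    simp only [dotProduct, Matrix.mulVec, msub, Matrix.submatrix_apply]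
    rw [← Finset.sum_coe_sort T (fun j => ∑ k ∈ T, y j * (S j k * y k))]
    refine Finset.sum_congr rfl fun j _ => ?_
    rw [Finset.mul_sum, ← Finset.sum_coe_sort T (fun k => y (j:Fin n) * (S (j:Fin n) k * y k))]
  have hquad : dotProduct yB ((msub S B).mulVec yB)
      = dotProduct xA ((msub S A).mulVec xA) := by
    have h1 := hquadT B
    have h2 := hquadT A
    have hAx : dotProduct (fun j : A => y (j : Fin n)) ((msub S A).mulVec (fun j : A => y (j : Fin n)))
        = dotProduct xA ((msub S A).mulVec xA) := by
      have : (fun j : A => y (j : Fin n)) = xA := by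
        funext j
        simp [hy, j.2]
      rw [this]
    rw [hyB, h1, ← hAx, h2]
    rw [← Finset.sum_subset hAB (fun x _ hx => by
      simp [hy, hx])]
    refine Finset.sum_congr rfl fun j hj => ?_
    rw [← Finset.sum_subset hAB (fun x _ hx => by simp [hy, hx])]
  -- Q_B(yB) equals schur S A i + S i i - ... ; put it together
  have hxAc : dotProduct xA ((msub S A).mulVec xA)
      = dotProduct (fun j : A => S i (j : Fin n)) xA := by
    rw [hMAxA]
    rw [dotProduct_comm]
    congr 1
    funext j
    exact hS.apply i (j : Fin n)
  unfold schur
  have hc : (fun j : B => S (j : Fin n) i) = (fun j : B => S i (j : Fin n)) :=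
    funext fun j => hS.apply i (j : Fin n)
  rw [hc]
  have := key
  rw [hlin, hquad, hxAc] at this
  -- this : 2 * L - L ≤ cB ⬝ (msub S B)⁻¹ cB  with L := dotProduct (fun j:A => S i j) xA
  have hfin : dotProduct (fun j : A => S i (j : Fin n)) xA
      ≤ dotProduct (fun j : B => S i (j : Fin n))
          ((msub S B)⁻¹.mulVec (fun j : B => S i (j : Fin n))) := by
    linarith
  linarith

theorem stmt_11 {n r : ℕ} (U : Matrix (Fin n) (Fin r) ℝ)
    (φ : Finset (Fin n) → ℝ)
    (hφ : ∀ T : Finset (Fin n),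
      φ T = Real.log (((U * U.transpose).submatrix
        (fun j : T => (j : Fin n)) (fun j : T => (j : Fin n))).det))
    (A B : Finset (Fin n)) (i : Fin n) (hAB : A ⊆ B) (hi : i ∉ B)
    (hpd : ∀ T : Finset (Fin n), T ⊆ insert i B →
      ((U * U.transpose).submatrix
        (fun j : T => (j : Fin n)) (fun j : T => (j : Fin n))).PosDef) :
    φ (insert i B) - φ B ≤ φ (insert i A) - φ A := by
  classical
  set S : Matrix (Fin n) (Fin n) ℝ := U * U.transpose with hSdef
  have hS : S.IsSymm := by
    unfold Matrix.IsSymm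
    rw [hSdef, Matrix.transpose_mul, Matrix.transpose_transpose]
  have hiA : i ∉ A := fun h => hi (hAB h)
  have hpdA : (msub S A).PosDef := hpd A ((hAB.trans (Finset.subset_insert i B)))
  have hpdB : (msub S B).PosDef := hpd B (Finset.subset_insert i B)
  have hpdiA : (msub S (insert i A)).PosDef := hpd _ (Finset.insert_subset_insert i hAB)
  have hpdiB : (msub S (insert i B)).PosDef := hpd _ (Finset.Subset.refl _)
  have hdA := det_insert S A i hiA hpdA
  have hdB := det_insert S B i hi hpdB
  have hsA := schur_pos S A i hiA hpdA hpdiA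
  have hsB := schur_pos S B i hi hpdB hpdiB
  have hφ' : ∀ T : Finset (Fin n), φ T = Real.log (msub S T).det := fun T => hφ T
  have hlogA : φ (insert i A) - φ A = Real.log (schur S A i) := by
    rw [hφ', hφ', hdA, Real.log_mul hpdA.det_pos.ne' hsA.ne']
    ring
  have hlogB : φ (insert i B) - φ B = Real.log (schur S B i) := by
    rw [hφ', hφ', hdB, Real.log_mul hpdB.det_pos.ne' hsB.ne']
    ring
  rw [hlogA, hlogB]
  exact Real.log_le_log hsB (schur_mono S hS A B i hAB hpdA hpdB)
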